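/- Let d ≥ 3 and let z_1, …, z_d ∈ ℤ^d be a basis of ℤ^d such that z̲_2, …, z̲_d are linearly independent in ℝ^{d−1}, |z̲_1| ≤ |z̲_2| ≤ |z̲_3| with z̲_1 ≠ 0, and ⟨z̲_1, z̲_2⟩ ≤ 0. If d ≥ 4, assume moreover that det Λ̲_{1,n} > |z̲_2| · det Λ̲_{1,n−1} for n = 3, …, d−1. Suppose α ∈ 𝔖_2 satisfies ⟨α, z_2⟩ · ⟨α_2, z_1⟩ ≥ 0. Then for every z ∈ Λ_{1,d−1} with |z̲| ≤ |z̲_2|, z ≠ 0, z ≠ ±z_2, which is not an integer multiple of z_1, we have |L_α(z)| · |z̲|^{d−1} ≥ (D_{1,2}^{d−1} / (D_{2,d−1} B_1^{d−1})) · (1 − 1/(2 B_1 B_2)). -/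

import Mathlib

open scoped InnerProductSpace

noncomputable section

/-- `ℝ^n` with the Euclidean structure. -/
abbrev E (n : ℕ) : Type := EuclideanSpace ℝ (Fin n)

/-- The projection `x ↦ x̲` forgetting the last coordinate. -/
def pr (d : ℕ) (x : E d) : E (d - 1) :=
  WithLp.toLp 2 (fun i : Fin (d - 1) => x (Fin.castLE (Nat.sub_le d 1) i))

/-- The canonical embedding of `ℤ^d` into `ℝ^d`. -/
def toE (d : ℕ) (z : Fin d → ℤ) : E d := WithLp.toLp 2 (fun i => (z i : ℝ))

/-- The `m`-dimensional volume of the parallelepiped spanned by `v 0, …, v (m-1)`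
(square root of the Gram determinant). -/
def gramVol {n m : ℕ} (v : Fin m → E n) : ℝ :=
  Real.sqrt ((Matrix.of (fun i j : Fin m => ⟪v i, v j⟫_ℝ)).det)

/-- `z` is a best approximation vector for the linear form `L_α : x ↦ ⟪α, x⟫`. -/
def IsBestApprox (d : ℕ) (α : E d) (z : Fin d → ℤ) : Prop :=
  pr d (toE d z) ≠ 0 ∧
  ∀ z' : Fin d → ℤ, pr d (toE d z') ≠ 0 →
    (‖pr d (toE d z')‖ ≤ ‖pr d (toE d z)‖ → |⟪α, toE d z⟫_ℝ| ≤ |⟪α, toE d z'⟫_ℝ|) ∧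
    (‖pr d (toE d z')‖ < ‖pr d (toE d z)‖ → |⟪α, toE d z⟫_ℝ| < |⟪α, toE d z'⟫_ℝ|)

/-- `det Λ̲_{k,l}` for a sequence of integer vectors: the `l`-dimensional volume of the
parallelepiped spanned by `z̲_k, …, z̲_{k+l-1}`. -/
def detL (d : ℕ) (z : ℕ → Fin d → ℤ) (k l : ℕ) : ℝ :=
  gramVol (fun i : Fin l => pr d (toE d (z (k + i.1))))

/-- `D_{k,l} = det Λ̲_{k,l} / |z̲_k|^l`. -/
def Dq (d : ℕ) (z : ℕ → Fin d → ℤ) (k l : ℕ) : ℝ :=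
  detL d z k l / ‖pr d (toE d (z k))‖ ^ l

/-- `B_k = |z̲_{k+1}| / |z̲_k|`. -/
def Bq (d : ℕ) (z : ℕ → Fin d → ℤ) (k : ℕ) : ℝ :=
  ‖pr d (toE d (z (k + 1)))‖ / ‖pr d (toE d (z k))‖

/-- `R_k = 1 / (2 |z̲_{k+1}| det Λ̲_{k,d-1})`. -/
def Rq (d : ℕ) (z : ℕ → Fin d → ℤ) (k : ℕ) : ℝ :=
  1 / (2 * ‖pr d (toE d (z (k + 1)))‖ * detL d z k (d - 1))

/-- `v 0, …, v (d-1)` form a basis of the lattice `ℤ^d`. -/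
def IsZBasis (d : ℕ) (v : Fin d → Fin d → ℤ) : Prop :=
  IsUnit ((Matrix.of (fun i j : Fin d => v j i)).det)

-- ===== auxiliary lemmas =====

lemma gramVol_nonneg' {n m : ℕ} (v : Fin m → E n) : 0 ≤ gramVol v := Real.sqrt_nonneg _

def coordMat {n m : ℕ} (v : Fin m → E n) : Matrix (Fin m) (Fin n) ℝ :=
  Matrix.of fun i j => v i j

lemma gram_eq_coordMat {n m : ℕ} (v : Fin m → E n) :
    (Matrix.of fun i j : Fin m => ⟪v i, v j⟫_ℝ) = coordMat v * (coordMat v).transpose := by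
  ext i j
  simp [Matrix.mul_apply, PiLp.inner_apply, RCLike.inner_apply, coordMat]
  exact Finset.sum_congr rfl fun _ _ => mul_comm _ _

lemma coordMat_map {n m : ℕ} (v : Fin m → E n) (A : Matrix (Fin m) (Fin m) ℝ) :
    coordMat (fun i => ∑ j, A i j • v j) = A * coordMat v := by
  ext i c
  simp only [coordMat, Matrix.mul_apply, Matrix.of_apply]
  simp

lemma gramVol_map {n m : ℕ} (v : Fin m → E n) (A : Matrix (Fin m) (Fin m) ℝ) :
    gramVol (fun i => ∑ j, A i j • v j) = |A.det| * gramVol v := by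
  unfold gramVol
  rw [gram_eq_coordMat, gram_eq_coordMat, coordMat_map, Matrix.transpose_mul]
  have h1 : (A * coordMat v) * ((coordMat v).transpose * A.transpose)
      = A * (coordMat v * (coordMat v).transpose) * A.transpose := by
    simp [Matrix.mul_assoc]
  rw [h1, Matrix.det_mul, Matrix.det_mul, Matrix.det_transpose]
  have h2 : A.det * (coordMat v * (coordMat v).transpose).det * A.det
      = A.det ^ 2 * (coordMat v * (coordMat v).transpose).det := by ring
  rw [h2, Real.sqrt_mul (sq_nonneg _), Real.sqrt_sq_eq_abs]

lemma gramVol_snoc_orth {n m : ℕ} (v : Fin m → E n) (q : E n)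
    (h : ∀ i, ⟪v i, q⟫_ℝ = 0) :
    gramVol (Fin.snoc v q : Fin (m+1) → E n) = gramVol v * ‖q‖ := by
  have h' : ∀ i, ⟪q, v i⟫_ℝ = 0 := fun i => by rw [real_inner_comm]; exact h i
  unfold gramVol
  rw [Matrix.det_succ_row _ (Fin.last m), Finset.sum_eq_single (Fin.last m)]
  · have h1 : ((Matrix.of fun i j : Fin (m+1) =>
        ⟪(Fin.snoc v q : Fin (m+1) → E n) i, (Fin.snoc v q : Fin (m+1) → E n) j⟫_ℝ).submatrix
        (Fin.last m).succAbove (Fin.last m).succAbove)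
        = Matrix.of fun i j : Fin m => ⟪v i, v j⟫_ℝ := by
      ext i j
      simp [Fin.succAbove_last, Fin.snoc_castSucc]
    rw [h1]
    have h2 : ((-1 : ℝ)) ^ ((Fin.last m : ℕ) + (Fin.last m : ℕ)) = 1 :=
      Even.neg_one_pow ⟨m, rfl⟩
    simp only [Matrix.of_apply, Fin.snoc_last, h2, one_mul]
    rw [real_inner_self_eq_norm_sq, mul_comm,
      Real.sqrt_mul' _ (sq_nonneg ‖q‖), Real.sqrt_sq (norm_nonneg q), mul_comm]
  · intro j _ hj
    have h0 : (Matrix.of fun i j : Fin (m+1) =>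
        ⟪(Fin.snoc v q : Fin (m+1) → E n) i, (Fin.snoc v q : Fin (m+1) → E n) j⟫_ℝ)
        (Fin.last m) j = 0 := by
      obtain ⟨j', rfl⟩ := Fin.exists_castSucc_eq.2 hj
      simp only [Matrix.of_apply, Fin.snoc_last, Fin.snoc_castSucc]
      exact h' j'
    rw [h0, mul_zero, zero_mul]
  · simp

lemma gramVol_square {m : ℕ} (v : Fin m → E m) :
    gramVol v = |(Matrix.of fun i j : Fin m => v i j).det| := by
  unfold gramVol
  rw [gram_eq_coordMat, Matrix.det_mul, Matrix.det_transpose, ← sq, Real.sqrt_sq_eq_abs]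
  rfl

/-- determinant of a matrix which is the identity except in the last row,
with `1` in the bottom-right corner. -/
lemma det_lastRowUnipotent {m : ℕ} (r : Fin (m+1) → ℝ) (hr : r (Fin.last m) = 1) :
    (Matrix.of fun i j : Fin (m+1) =>
      if i = Fin.last m then r j else if (i : Fin (m+1)) = j then 1 else 0).det = 1 := by
  rw [Matrix.det_succ_column _ (Fin.last m), Finset.sum_eq_single (Fin.last m)]
  · have h1 : ((Matrix.of fun i j : Fin (m+1) =>
        if i = Fin.last m then r j else if (i : Fin (m+1)) = j then 1 else 0).submatrix
        (Fin.last m).succAbove (Fin.last m).succAbove) = (1 : Matrix (Fin m) (Fin m) ℝ) := by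
      ext i j
      simp only [Fin.succAbove_last, Matrix.submatrix_apply, Matrix.of_apply,
        Matrix.one_apply]
      rw [if_neg (Fin.castSucc_lt_last i).ne, if_congr ⟨fun h => Fin.castSucc_injective _ h,
        fun h => by rw [h]⟩ rfl rfl]
    rw [h1, Matrix.det_one]
    simp [hr, Even.neg_one_pow (⟨m, rfl⟩ : Even (m + m))]
  · intro k _ hk
    have h0 : (Matrix.of fun i j : Fin (m+1) =>
        if i = Fin.last m then r j else if (i : Fin (m+1)) = j then 1 else 0) k (Fin.last m)
        = 0 := by
      simp only [Matrix.of_apply, if_neg hk, if_neg hk]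
    rw [h0, mul_zero, zero_mul]
  · simp

lemma pr_castSucc {m : ℕ} (x : E (m+1)) (i : Fin m) :
    pr (m+1) x ⟨i.1, by omega⟩ = x i.castSucc := by
  unfold pr; rfl

lemma inner_split {m : ℕ} (x y : E (m+1)) :
    ⟪x, y⟫_ℝ = ⟪pr (m+1) x, pr (m+1) y⟫_ℝ + x (Fin.last m) * y (Fin.last m) := by
  simp only [PiLp.inner_apply, RCLike.inner_apply, conj_trivial]
  rw [Fin.sum_univ_castSucc]
  congr 1
  ring

lemma norm_pr_le {m : ℕ} (x : E (m+1)) : ‖pr (m+1) x‖ ≤ ‖x‖ := by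
  rw [EuclideanSpace.norm_eq, EuclideanSpace.norm_eq]
  apply Real.sqrt_le_sqrt
  rw [Fin.sum_univ_castSucc]
  have h1 : ∑ i : Fin ((m+1)-1), ‖pr (m+1) x i‖ ^ 2 = ∑ i : Fin m, ‖x i.castSucc‖ ^ 2 :=
    Finset.sum_congr rfl fun i _ => by unfold pr; rfl
  rw [h1]
  exact le_add_of_nonneg_right (by positivity)

lemma abs_add_of_mul_nonneg {x y : ℝ} (h : 0 ≤ x * y) : |x + y| = |x| + |y| := by
  rcases le_or_gt 0 x with hx | hx
  · rcases le_or_gt 0 y with hy | hy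
    · rw [abs_of_nonneg hx, abs_of_nonneg hy, abs_of_nonneg (by linarith)]
    · have hx0 : x ≤ 0 := by nlinarith
      have hx' : x = 0 := le_antisymm hx0 hx
      simp [hx']
  · have hy : y ≤ 0 := by nlinarith
    rw [abs_of_nonpos hy, abs_of_nonpos hx.le, abs_of_nonpos (by linarith)]
    ring

lemma E_sum_apply {n : ℕ} {ι : Type*} (s : Finset ι) (f : ι → E n) (j : Fin n) :
    (∑ i ∈ s, f i) j = ∑ i ∈ s, f i j := by
  induction s using Finset.cons_induction with
  | empty => rfl
  | cons a s ha ih => rw [Finset.sum_cons, Finset.sum_cons, ← ih]; rfl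

lemma sum_delta_smul {n N : ℕ} (v : Fin N → E n) (i : Fin N) :
    ∑ j, (if i = j then (1:ℝ) else 0) • v j = v i := by
  rw [Finset.sum_eq_single i]
  · simp
  · intro b _ hb
    rw [if_neg (fun h => hb h.symm), zero_smul]
  · simp

set_option maxHeartbeats 2000000 in
theorem stmt10 (d : ℕ) (hd : 3 ≤ d) (z : ℕ → Fin d → ℤ)
    (hbasis : IsZBasis d (fun j => z (j.1 + 1)))
    (hlip2 : LinearIndependent ℝ (fun i : Fin (d - 1) => pr d (toE d (z (i.1 + 2)))))
    (hz1 : pr d (toE d (z 1)) ≠ 0)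
    (h12 : ‖pr d (toE d (z 1))‖ ≤ ‖pr d (toE d (z 2))‖)
    (h23 : ‖pr d (toE d (z 2))‖ ≤ ‖pr d (toE d (z 3))‖)
    (hneg : ⟪pr d (toE d (z 1)), pr d (toE d (z 2))⟫_ℝ ≤ 0)
    (hdets : ∀ n, 3 ≤ n → n ≤ d - 1 →
      ‖pr d (toE d (z 2))‖ * detL d z 1 (n - 1) < detL d z 1 n)
    (α2 : E d) (hα2pi : α2 ⟨d - 1, by omega⟩ = 1)
    (hα2perp : ∀ i : Fin (d - 1), ⟪α2, toE d (z (i.1 + 2))⟫_ℝ = 0)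
    (α : E d) (hαpi : α ⟨d - 1, by omega⟩ = 1) (hαS : ‖α - α2‖ ≤ Rq d z 2)
    (hsign : 0 ≤ ⟪α, toE d (z 2)⟫_ℝ * ⟪α2, toE d (z 1)⟫_ℝ)
    (w : Fin d → ℤ)
    (hwmem : ∃ c : Fin (d - 1) → ℤ, w = ∑ i, c i • z (i.1 + 1))
    (hwle : ‖pr d (toE d w)‖ ≤ ‖pr d (toE d (z 2))‖)
    (hw0 : w ≠ 0) (hwz2 : w ≠ z 2) (hwz2' : w ≠ -z 2)
    (hwmul : ∀ m : ℤ, w ≠ m • z 1) :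
    Dq d z 1 2 ^ (d - 1) / (Dq d z 2 (d - 1) * Bq d z 1 ^ (d - 1)) *
        (1 - 1 / (2 * Bq d z 1 * Bq d z 2)) ≤
      |⟪α, toE d w⟫_ℝ| * ‖pr d (toE d w)‖ ^ (d - 1) := by
  obtain ⟨m, rfl⟩ : ∃ m, d = m + 1 := ⟨d - 1, by omega⟩
  have hm : 2 ≤ m := by omega
  classical
  -- positivity of basic norms
  have hu2ne : pr (m+1) (toE (m+1) (z 2)) ≠ 0 := by
    have h := hlip2.ne_zero ⟨0, by omega⟩
    simpa using h
  have hu3ne : pr (m+1) (toE (m+1) (z 3)) ≠ 0 := by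
    have h := hlip2.ne_zero ⟨1, by omega⟩
    simpa using h
  have hu1pos : 0 < ‖pr (m+1) (toE (m+1) (z 1))‖ := norm_pos_iff.mpr hz1
  have hu2pos : 0 < ‖pr (m+1) (toE (m+1) (z 2))‖ := norm_pos_iff.mpr hu2ne
  have hu3pos : 0 < ‖pr (m+1) (toE (m+1) (z 3))‖ := norm_pos_iff.mpr hu3ne
  obtain ⟨c, hw⟩ := hwmem
  -- real-scalar expansion of w
  have htoE_sum : ∀ (v : Fin ((m+1)-1) → ℤ) (zz : Fin ((m+1)-1) → Fin (m+1) → ℤ),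
      toE (m+1) (∑ i, v i • zz i) = ∑ i, (v i : ℝ) • toE (m+1) (zz i) := by
    intro v zz
    ext j
    rw [E_sum_apply]
    simp only [toE, Finset.sum_apply, PiLp.smul_apply, smul_eq_mul]
    push_cast
    exact Finset.sum_congr rfl fun i _ => by simp
  have hwE : toE (m+1) w = ∑ i, (c i : ℝ) • toE (m+1) (z (i.1+1)) := by
    rw [hw]; exact htoE_sum _ _
  have hpr_sum : ∀ {ι : Type} [Fintype ι] (f : ι → E (m+1)),
      pr (m+1) (∑ i, f i) = ∑ i, pr (m+1) (f i) := by
    intro ι _ f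
    ext j
    rw [E_sum_apply]
    rw [show pr (m+1) (∑ i, f i) j = (∑ i, f i) (Fin.castLE (by omega) j) from by unfold pr; rfl, E_sum_apply]
    exact Finset.sum_congr rfl fun i _ => by unfold pr; rfl
  have hwpr : pr (m+1) (toE (m+1) w) = ∑ i, (c i : ℝ) • pr (m+1) (toE (m+1) (z (i.1+1))) := by
    rw [hwE, hpr_sum]
    exact Finset.sum_congr rfl fun i _ => by ext j; simp [pr]
  -- Step A : coefficients of index ≥ 2 vanish
  have hc2 : ∀ i : Fin ((m+1)-1), 2 ≤ i.1 → c i = 0 := by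
    by_contra hcon
    push_neg at hcon
    obtain ⟨i₀, hi₀2, hi₀⟩ := hcon
    set T : Finset (Fin ((m+1)-1)) := Finset.univ.filter (fun i => 2 ≤ i.1 ∧ c i ≠ 0) with hT
    have hTne : T.Nonempty := ⟨i₀, by simp [hT, hi₀2, hi₀]⟩
    set nn : Fin ((m+1)-1) := T.max' hTne with hnn
    have hnmem : 2 ≤ nn.1 ∧ c nn ≠ 0 := by
      have h := Finset.mem_filter.mp (T.max'_mem hTne)
      exact h.2
    have hmax : ∀ i, nn < i → c i = 0 := by
      intro i hi
      by_contra hne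
      have h2i : 2 ≤ i.1 := by
        have := Fin.lt_def.mp hi
        omega
      have hiT : i ∈ T := by
        rw [hT, Finset.mem_filter]
        exact ⟨Finset.mem_univ _, h2i, hne⟩
      exact absurd (T.le_max' i hiT) (not_le.2 hi)
    -- the subspace spanned by z̲_1, ..., z̲_{nn}
    set f : Fin nn.1 → E ((m+1)-1) := fun j => pr (m+1) (toE (m+1) (z (1 + j.1))) with hf
    set V := Submodule.span ℝ (Set.range f) with hV
    set p : E ((m+1)-1) :=
      (V.orthogonalProjectionOnto (pr (m+1) (toE (m+1) (z (1 + nn.1)))) : E ((m+1)-1)) with hp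
    set q := pr (m+1) (toE (m+1) (z (1 + nn.1))) - p with hq
    have hqV : q ∈ Vᗮ := Submodule.sub_starProjection_mem_orthogonal _
    have hpV : p ∈ V := Submodule.coe_mem _
    have hfq : ∀ j : Fin nn.1, ⟪f j, q⟫_ℝ = 0 := fun j =>
      (Submodule.mem_orthogonal V q).mp hqV (f j) (Submodule.subset_span ⟨j, rfl⟩)
    obtain ⟨aa, haa⟩ : ∃ aa : Fin nn.1 → ℝ, ∑ j, aa j • f j = p :=
      (Submodule.mem_span_range_iff_exists_fun ℝ).mp hpV
    set rr : Fin (nn.1+1) → ℝ := fun j => if h : j.1 < nn.1 then -(aa ⟨j.1, h⟩) else 1 with hrr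
    have hrrlast : rr (Fin.last nn.1) = 1 := by
      rw [hrr]
      simp
    set AA : Matrix (Fin (nn.1+1)) (Fin (nn.1+1)) ℝ :=
      Matrix.of (fun i j : Fin (nn.1+1) =>
        if i = Fin.last nn.1 then rr j else if i = j then 1 else 0) with hAA
    have hAdet : AA.det = 1 := det_lastRowUnipotent rr hrrlast
    have hsnoc : (fun i : Fin (nn.1+1) =>
        ∑ j, AA i j • pr (m+1) (toE (m+1) (z (1 + j.1))))
        = (Fin.snoc f q : Fin (nn.1+1) → E ((m+1)-1)) := by
      funext i
      refine Fin.lastCases ?_ ?_ i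
      · rw [Fin.snoc_last, Fin.sum_univ_castSucc]
        have h1 : ∀ j : Fin nn.1, AA (Fin.last nn.1) (Fin.castSucc j) •
            pr (m+1) (toE (m+1) (z (1 + (Fin.castSucc j).1))) = -(aa j • f j) := by
          intro j
          rw [hAA]
          simp only [Matrix.of_apply, eq_self_iff_true, if_true, hrr, Fin.coe_castSucc,
            dif_pos j.isLt, Fin.eta, neg_smul, hf]
        rw [Finset.sum_congr rfl (fun j _ => h1 j), Finset.sum_neg_distrib, haa]
        have h2 : AA (Fin.last nn.1) (Fin.last nn.1) •
            pr (m+1) (toE (m+1) (z (1 + (Fin.last nn.1).1))) =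
            pr (m+1) (toE (m+1) (z (1 + nn.1))) := by
          rw [hAA]
          simp only [Matrix.of_apply, eq_self_iff_true, if_true, hrrlast, one_smul, Fin.val_last]
        rw [h2, hq]
        abel
      · intro i'
        rw [Fin.snoc_castSucc]
        have h3 : ∀ j, AA (Fin.castSucc i') j
            = if (Fin.castSucc i' : Fin (nn.1+1)) = j then (1:ℝ) else 0 := by
          intro j
          rw [hAA]
          simp only [Matrix.of_apply, if_neg (Fin.castSucc_lt_last i').ne]
        rw [Finset.sum_congr rfl (fun j _ => by rw [h3 j])]
        exact sum_delta_smul _ (Fin.castSucc i')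
    have e1 := gramVol_map (fun j : Fin (nn.1+1) => pr (m+1) (toE (m+1) (z (1 + j.1)))) AA
    rw [hsnoc, gramVol_snoc_orth f q hfq, hAdet, abs_one, one_mul] at e1
    have hgram : detL (m+1) z 1 (nn.1+1) = detL (m+1) z 1 nn.1 * ‖q‖ := e1.symm
    have hd2 := hdets (nn.1+1) (by omega) (by omega)
    simp only [Nat.add_sub_cancel] at hd2
    rw [hgram] at hd2
    have hdN_nonneg : 0 ≤ detL (m+1) z 1 nn.1 := gramVol_nonneg' _
    have hdNpos : 0 < detL (m+1) z 1 nn.1 := by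
      rcases hdN_nonneg.lt_or_eq with h | h
      · exact h
      · exfalso
        rw [← h] at hd2
        simp at hd2
    have hqgt : ‖pr (m+1) (toE (m+1) (z 2))‖ < ‖q‖ := by
      by_contra hle
      push_neg at hle
      nlinarith [hd2, hdNpos]
    have hinner : ⟪pr (m+1) (toE (m+1) w), q⟫_ℝ = (c nn : ℝ) * ‖q‖^2 := by
      rw [hwpr, sum_inner]
      refine (Finset.sum_eq_single nn ?_ ?_).trans ?_
      · intro i _ hine
        rw [real_inner_smul_left]
        rcases lt_or_gt_of_ne hine with hlt | hgt
        · have hmem : pr (m+1) (toE (m+1) (z (i.1+1))) ∈ V := by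
            apply Submodule.subset_span
            refine ⟨⟨i.1, Fin.lt_def.mp hlt⟩, ?_⟩
            show pr (m+1) (toE (m+1) (z (1 + i.1))) = pr (m+1) (toE (m+1) (z (i.1 + 1)))
            rw [Nat.add_comm 1 i.1]
          rw [(Submodule.mem_orthogonal V q).mp hqV _ hmem, mul_zero]
        · rw [hmax i hgt]
          simp
      · intro h
        exact absurd (Finset.mem_univ _) h
      · rw [real_inner_smul_left]
        congr 1
        have hplus : pr (m+1) (toE (m+1) (z (nn.1+1))) = p + q := by
          rw [Nat.add_comm nn.1 1, hq]
          abel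
        rw [hplus, inner_add_left, (Submodule.mem_orthogonal V q).mp hqV p hpV,
          real_inner_self_eq_norm_sq, zero_add]
    have hcnn : (1:ℝ) ≤ |(c nn : ℝ)| := by
      rw [← Int.cast_abs]
      exact_mod_cast (by rw [Int.abs_eq_natAbs]; omega : (1:ℤ) ≤ |c nn|)
    have hCS := abs_real_inner_le_norm (pr (m+1) (toE (m+1) w)) q
    rw [hinner, abs_mul, abs_of_nonneg (sq_nonneg ‖q‖)] at hCS
    have hqpos : 0 < ‖q‖ := hu2pos.trans hqgt
    nlinarith [hCS, mul_nonneg (sub_nonneg.2 hcnn) (sq_nonneg ‖q‖),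
      mul_le_mul_of_nonneg_right hwle hqpos.le, mul_lt_mul_of_pos_right hqgt hqpos]
  -- Step B : w = a z1 + b z2 with ab > 0
  have hi0 : (0:ℕ) < (m+1)-1 := by omega
  have hi1 : (1:ℕ) < (m+1)-1 := by omega
  set i0 : Fin ((m+1)-1) := ⟨0, hi0⟩ with hi0def
  set i1 : Fin ((m+1)-1) := ⟨1, hi1⟩ with hi1def
  set a : ℤ := c i0 with ha_def
  set b : ℤ := c i1 with hb_def
  have hw2Z : w = a • z 1 + b • z 2 := by
    have hne01 : i0 ≠ i1 := by simp [hi0def, hi1def, Fin.ext_iff]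
    have hzero : ∀ x ∈ (Finset.univ : Finset (Fin ((m+1)-1))), x ∉ ({i0, i1} : Finset (Fin ((m+1)-1))) → c x • z (x.1+1) = 0 := by
      intro x _ hx
      have hx2 : 2 ≤ x.1 := by
        simp only [Finset.mem_insert, Finset.mem_singleton] at hx
        push_neg at hx
        have h1 : x.1 ≠ 0 := fun h => hx.1 (by rw [hi0def]; exact Fin.ext h)
        have h2 : x.1 ≠ 1 := fun h => hx.2 (by rw [hi1def]; exact Fin.ext h)
        omega
      rw [hc2 x hx2, zero_smul]
    calc w = ∑ i, c i • z (i.1+1) := hw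
      _ = ∑ i ∈ ({i0, i1} : Finset (Fin ((m+1)-1))), c i • z (i.1+1) :=
          (Finset.sum_subset (Finset.subset_univ _) hzero).symm
      _ = a • z 1 + b • z 2 := by rw [Finset.sum_pair hne01]
  have hw2E : toE (m+1) w = (a : ℝ) • toE (m+1) (z 1) + (b : ℝ) • toE (m+1) (z 2) := by
    rw [hw2Z]
    ext j
    simp only [toE, PiLp.add_apply, PiLp.smul_apply, smul_eq_mul]
    push_cast
    simp
  have hw2pr : pr (m+1) (toE (m+1) w) = (a : ℝ) • pr (m+1) (toE (m+1) (z 1)) + (b : ℝ) • pr (m+1) (toE (m+1) (z 2)) := by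
    rw [hw2E]; ext j; simp [pr]
  have hb0 : b ≠ 0 := by
    intro h
    apply hwmul a
    rw [hw2Z, h, zero_smul, add_zero]
  have ha0 : a ≠ 0 := by
    intro h
    have hwbz : w = b • z 2 := by rw [hw2Z, h, zero_smul, zero_add]
    have hb1 : b ≠ 1 := fun hb => hwz2 (by rw [hwbz, hb, one_smul])
    have hbm1 : b ≠ -1 := fun hb => hwz2' (by rw [hwbz, hb, neg_smul, one_smul])
    have h2' : (2:ℤ) ≤ |b| := by rw [Int.abs_eq_natAbs]; omega
    have h2R : (2:ℝ) ≤ |(b:ℝ)| := by rw [← Int.cast_abs]; exact_mod_cast h2'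
    have hnorm : ‖pr (m+1) (toE (m+1) w)‖ = |(b:ℝ)| * ‖pr (m+1) (toE (m+1) (z 2))‖ := by
      rw [hw2pr, h]
      push_cast
      rw [zero_smul, zero_add, norm_smul, Real.norm_eq_abs]
    rw [hnorm] at hwle
    nlinarith
  have hab : 0 < a * b := by
    rcases lt_trichotomy (a*b) 0 with hneg' | h0 | hpos
    · exfalso
      have hprod : (0:ℝ) ≤ ((a:ℝ)*(b:ℝ)) * ⟪pr (m+1) (toE (m+1) (z 1)), pr (m+1) (toE (m+1) (z 2))⟫_ℝ := by
        have hab' : ((a:ℝ)*(b:ℝ)) ≤ 0 := by exact_mod_cast hneg'.le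
        nlinarith [mul_nonneg (neg_nonneg.2 hab') (neg_nonneg.2 hneg)]
      have hexp : ‖pr (m+1) (toE (m+1) w)‖^2 = (a:ℝ)^2*‖pr (m+1) (toE (m+1) (z 1))‖^2
          + 2*((a:ℝ)*(b:ℝ))*⟪pr (m+1) (toE (m+1) (z 1)), pr (m+1) (toE (m+1) (z 2))⟫_ℝ + (b:ℝ)^2*‖pr (m+1) (toE (m+1) (z 2))‖^2 := by
        rw [hw2pr, @norm_add_sq_real, norm_smul, norm_smul, real_inner_smul_left,
          real_inner_smul_right, Real.norm_eq_abs, Real.norm_eq_abs, mul_pow, mul_pow,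
          sq_abs, sq_abs]
        ring
      have hsq : ‖pr (m+1) (toE (m+1) w)‖^2 ≤ ‖pr (m+1) (toE (m+1) (z 2))‖^2 :=
        pow_le_pow_left₀ (norm_nonneg _) hwle 2
      have h1a : (1:ℝ) ≤ (a:ℝ)^2 := by
        have : (1:ℤ) ≤ a^2 := by rcases (by omega : a ≤ -1 ∨ 1 ≤ a) with h | h <;> nlinarith
        exact_mod_cast this
      have h1b : (1:ℝ) ≤ (b:ℝ)^2 := by
        have : (1:ℤ) ≤ b^2 := by rcases (by omega : b ≤ -1 ∨ 1 ≤ b) with h | h <;> nlinarith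
        exact_mod_cast this
      nlinarith [mul_nonneg (sub_nonneg.2 h1a) (sq_nonneg ‖pr (m+1) (toE (m+1) (z 1))‖),
        mul_nonneg (sub_nonneg.2 h1b) (sq_nonneg ‖pr (m+1) (toE (m+1) (z 2))‖), pow_pos hu1pos 2]
    · exact absurd h0 (mul_ne_zero ha0 hb0)
    · exact hpos
  -- Step C : |⟪α2, z1⟫| * Δ = 1
  have hAΔ : |⟪α2, toE (m+1) (z 1)⟫_ℝ| * detL (m+1) z 2 ((m+1)-1) = 1 := by
    set Mz : Matrix (Fin (m+1)) (Fin (m+1)) ℝ :=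
      Matrix.of (fun i j : Fin (m+1) => ((z (j.1+1) i : ℤ) : ℝ)) with hMz_def
    have hMzdet : |Mz.det| = 1 := by
      have h3 : (((Matrix.of (fun i j : Fin (m+1) => z (j.1+1) i)).det : ℤ) : ℝ) = Mz.det := by
        exact RingHom.map_det (Int.castRingHom ℝ) _
      have h4 : IsUnit (Matrix.of (fun i j : Fin (m+1) => z (j.1+1) i)).det := hbasis
      rcases Int.isUnit_iff.mp h4 with h | h <;> rw [← h3, h] <;> norm_num
    set Eα : Matrix (Fin (m+1)) (Fin (m+1)) ℝ :=
      Matrix.of (fun i j : Fin (m+1) => if i = Fin.last m then α2 j else if i = j then 1 else 0)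
      with hEα_def
    have hEdet : Eα.det = 1 := det_lastRowUnipotent α2 hα2pi
    set Nm := Eα * Mz with hNm_def
    have hNdet : |Nm.det| = 1 := by
      rw [hNm_def, Matrix.det_mul, hEdet, one_mul]
      exact hMzdet
    have hNlast : ∀ j : Fin (m+1), Nm (Fin.last m) j = ⟪α2, toE (m+1) (z (j.1+1))⟫_ℝ := by
      intro j
      rw [hNm_def, Matrix.mul_apply, PiLp.inner_apply]
      apply Finset.sum_congr rfl
      intro k _
      rw [hEα_def, hMz_def]
      simp only [Matrix.of_apply, if_pos rfl, RCLike.inner_apply, conj_trivial]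
      simp [toE, mul_comm]
    have hNother : ∀ (i j : Fin (m+1)), i ≠ Fin.last m → Nm i j = Mz i j := by
      intro i j hi
      rw [hNm_def, Matrix.mul_apply]
      rw [Finset.sum_eq_single i]
      · rw [hEα_def]
        simp only [Matrix.of_apply, if_neg hi]
        simp
      · intro k _ hk
        rw [hEα_def]
        simp only [Matrix.of_apply, if_neg hi]
        rw [if_neg (fun h => hk h.symm), zero_mul]
      · simp
    have hNlast0 : Nm (Fin.last m) 0 = ⟪α2, toE (m+1) (z 1)⟫_ℝ := by
      rw [hNlast 0]
      norm_num
    have hNlastj : ∀ j : Fin (m+1), j ≠ 0 → Nm (Fin.last m) j = 0 := by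
      intro j hj
      rw [hNlast j]
      have hjpos : 0 < j.1 := Fin.pos_of_ne_zero hj
      have hx := hα2perp ⟨j.1 - 1, by omega⟩
      have he : (j.1 - 1) + 2 = j.1 + 1 := by omega
      rw [he] at hx
      exact hx
    have hexp : Nm.det = (-1:ℝ)^((Fin.last m).1 + ((0:Fin (m+1))).1) * Nm (Fin.last m) 0 *
        (Nm.submatrix (Fin.last m).succAbove (0:Fin (m+1)).succAbove).det := by
      rw [Matrix.det_succ_row Nm (Fin.last m)]
      refine Finset.sum_eq_single (0 : Fin (m+1)) ?_ ?_
      · intro j _ hj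
        rw [hNlastj j hj, mul_zero, zero_mul]
      · intro h
        exact absurd (Finset.mem_univ _) h
    have hgv : detL (m+1) z 2 ((m+1)-1) = |(Matrix.of fun i j : Fin ((m+1)-1) =>
        pr (m+1) (toE (m+1) (z (2+i.1))) j).det| := gramVol_square _
    have hPT : Nm.submatrix (Fin.last m).succAbove (0:Fin (m+1)).succAbove
        = (Matrix.of fun i j : Fin ((m+1)-1) =>
            pr (m+1) (toE (m+1) (z (2+i.1))) j).transpose := by
      ext i j
      rw [Matrix.transpose_apply, Matrix.submatrix_apply, Fin.succAbove_last, Fin.succAbove_zero,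
        hNother _ _ (Fin.castSucc_lt_last i).ne, hMz_def]
      simp only [Matrix.of_apply]
      rw [show ((Fin.succ j) : ℕ) + 1 = 2 + j.1 from by simp [Fin.val_succ]; ring]
      rfl
    have hfin : |Nm.det| = |⟪α2, toE (m+1) (z 1)⟫_ℝ| * detL (m+1) z 2 ((m+1)-1) := by
      rw [hexp, abs_mul, abs_mul, hNlast0, hPT, Matrix.det_transpose, abs_pow, abs_neg,
        abs_one, one_pow, one_mul, hgv]
    rw [← hfin, hNdet]
  have hΔnonneg : 0 ≤ detL (m+1) z 2 ((m+1)-1) := gramVol_nonneg' _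
  have hΔpos : 0 < detL (m+1) z 2 ((m+1)-1) := by
    rcases hΔnonneg.lt_or_eq with h | h
    · exact h
    · rw [← h, mul_zero] at hAΔ; norm_num at hAΔ
  -- Step 2D : height bound
  obtain ⟨H, hHnn, hH12, hHle⟩ : ∃ H : ℝ, 0 ≤ H ∧ detL (m+1) z 1 2 = ‖pr (m+1) (toE (m+1) (z 1))‖ * H ∧
      H ≤ ‖pr (m+1) (toE (m+1) w)‖ := by
    set tc := ⟪pr (m+1) (toE (m+1) (z 1)), pr (m+1) (toE (m+1) (z 2))⟫_ℝ / ‖pr (m+1) (toE (m+1) (z 1))‖^2 with ht_def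
    set q2 := pr (m+1) (toE (m+1) (z 2)) - tc • pr (m+1) (toE (m+1) (z 1)) with hq2_def
    have horth : ⟪pr (m+1) (toE (m+1) (z 1)), q2⟫_ℝ = 0 := by
      rw [hq2_def, inner_sub_right, real_inner_smul_right, ht_def, real_inner_self_eq_norm_sq]
      field_simp
      simp
    refine ⟨‖q2‖, norm_nonneg _, ?_, ?_⟩
    · have hnormq2 : ‖q2‖^2 = ‖pr (m+1) (toE (m+1) (z 2))‖^2 - 2*tc*⟪pr (m+1) (toE (m+1) (z 1)), pr (m+1) (toE (m+1) (z 2))⟫_ℝ + tc^2*‖pr (m+1) (toE (m+1) (z 1))‖^2 := by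
        rw [hq2_def, @norm_sub_sq_real, real_inner_smul_right, real_inner_comm, norm_smul,
          Real.norm_eq_abs, mul_pow, sq_abs]
        ring
      have hdet2 : detL (m+1) z 1 2
          = Real.sqrt (‖pr (m+1) (toE (m+1) (z 1))‖^2*‖pr (m+1) (toE (m+1) (z 2))‖^2 - ⟪pr (m+1) (toE (m+1) (z 1)), pr (m+1) (toE (m+1) (z 2))⟫_ℝ^2) := by
        unfold detL gramVol
        rw [Matrix.det_fin_two]
        congr 1
        show ⟪pr (m+1) (toE (m+1) (z 1)), pr (m+1) (toE (m+1) (z 1))⟫_ℝ * ⟪pr (m+1) (toE (m+1) (z 2)), pr (m+1) (toE (m+1) (z 2))⟫_ℝ - ⟪pr (m+1) (toE (m+1) (z 1)), pr (m+1) (toE (m+1) (z 2))⟫_ℝ * ⟪pr (m+1) (toE (m+1) (z 2)), pr (m+1) (toE (m+1) (z 1))⟫_ℝ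
            = ‖pr (m+1) (toE (m+1) (z 1))‖^2*‖pr (m+1) (toE (m+1) (z 2))‖^2 - ⟪pr (m+1) (toE (m+1) (z 1)), pr (m+1) (toE (m+1) (z 2))⟫_ℝ^2
        rw [real_inner_self_eq_norm_sq, real_inner_self_eq_norm_sq, real_inner_comm]
        ring
      have hfinal : ‖pr (m+1) (toE (m+1) (z 1))‖^2*‖pr (m+1) (toE (m+1) (z 2))‖^2 - ⟪pr (m+1) (toE (m+1) (z 1)), pr (m+1) (toE (m+1) (z 2))⟫_ℝ^2 = (‖pr (m+1) (toE (m+1) (z 1))‖*‖q2‖)^2 := by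
        rw [mul_pow, hnormq2, ht_def]
        field_simp
        ring
      rw [hdet2, hfinal, Real.sqrt_sq (by positivity)]
    · have hu2q2 : ⟪pr (m+1) (toE (m+1) (z 2)), q2⟫_ℝ = ‖q2‖^2 := by
        have hsplit2 : (pr (m+1) (toE (m+1) (z 2)) : E ((m+1)-1)) = q2 + tc • pr (m+1) (toE (m+1) (z 1)) := by
          rw [hq2_def]
          abel
        rw [hsplit2, inner_add_left, real_inner_smul_left, horth,
          real_inner_self_eq_norm_sq, mul_zero, add_zero]
      have hwq2 : ⟪pr (m+1) (toE (m+1) w), q2⟫_ℝ = (b:ℝ) * ‖q2‖^2 := by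
        rw [hw2pr, inner_add_left, real_inner_smul_left, real_inner_smul_left, horth,
          hu2q2, mul_zero, zero_add]
      rcases eq_or_lt_of_le (norm_nonneg q2) with h0 | hpos
      · rw [← h0]
        exact norm_nonneg _
      · have hCS : |⟪pr (m+1) (toE (m+1) w), q2⟫_ℝ| ≤ ‖pr (m+1) (toE (m+1) w)‖ * ‖q2‖ :=
          abs_real_inner_le_norm _ _
        rw [hwq2, abs_mul, abs_of_nonneg (sq_nonneg ‖q2‖)] at hCS
        have h1b : (1:ℝ) ≤ |(b:ℝ)| := by
          rw [← Int.cast_abs]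
          exact_mod_cast (by rw [Int.abs_eq_natAbs]; omega : (1:ℤ) ≤ |b|)
        nlinarith [hpos]
  -- Step E : linear form bound
  have hkey : (1 - ‖pr (m+1) (toE (m+1) (z 1))‖/(2*‖pr (m+1) (toE (m+1) (z 3))‖)) / detL (m+1) z 2 ((m+1)-1) ≤ |⟪α, toE (m+1) w⟫_ℝ| := by
    set A := ⟪α2, toE (m+1) (z 1)⟫_ℝ with hA_def
    set s := ⟪α, toE (m+1) (z 2)⟫_ℝ with hs_def
    set δ := ⟪α - α2, toE (m+1) (z 1)⟫_ℝ with hδ_def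
    have habsA : |A| = 1 / detL (m+1) z 2 ((m+1)-1) := by
      rw [eq_div_iff hΔpos.ne']
      exact hAΔ
    have hprlast : (α - α2) (Fin.last m) = 0 := by
      have h1 : α (Fin.last m) = 1 := hαpi
      have h2 : α2 (Fin.last m) = 1 := hα2pi
      show α (Fin.last m) - α2 (Fin.last m) = 0
      rw [h1, h2, sub_self]
    have hδbound : |δ| ≤ Rq (m+1) z 2 * ‖pr (m+1) (toE (m+1) (z 1))‖ := by
      have hsplit : δ = ⟪pr (m+1) (α - α2), pr (m+1) (toE (m+1) (z 1))⟫_ℝ := by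
        rw [hδ_def, inner_split (α - α2) (toE (m+1) (z 1)), hprlast, zero_mul, add_zero]
      rw [hsplit]
      calc |⟪pr (m+1) (α - α2), pr (m+1) (toE (m+1) (z 1))⟫_ℝ|
          ≤ ‖pr (m+1) (α - α2)‖ * ‖pr (m+1) (toE (m+1) (z 1))‖ := abs_real_inner_le_norm _ _
        _ ≤ ‖α - α2‖ * ‖pr (m+1) (toE (m+1) (z 1))‖ := mul_le_mul_of_nonneg_right (norm_pr_le _) (norm_nonneg _)
        _ ≤ Rq (m+1) z 2 * ‖pr (m+1) (toE (m+1) (z 1))‖ := mul_le_mul_of_nonneg_right hαS (norm_nonneg _)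
    have hδb2 : |δ| ≤ (‖pr (m+1) (toE (m+1) (z 1))‖/(2*‖pr (m+1) (toE (m+1) (z 3))‖))/detL (m+1) z 2 ((m+1)-1) := by
      have hRq : Rq (m+1) z 2 * ‖pr (m+1) (toE (m+1) (z 1))‖
          = (‖pr (m+1) (toE (m+1) (z 1))‖/(2*‖pr (m+1) (toE (m+1) (z 3))‖))/detL (m+1) z 2 ((m+1)-1) := by
        rw [Rq, show (2:ℕ)+1 = 3 from rfl, div_div, one_div_mul_eq_div]
      rw [hRq] at hδbound
      exact hδbound
    have hℓ : ⟪α, toE (m+1) w⟫_ℝ = ((a:ℝ)*A + (b:ℝ)*s) + (a:ℝ)*δ := by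
      rw [hw2E, inner_add_right, real_inner_smul_right, real_inner_smul_right]
      have h1 : ⟪α, toE (m+1) (z 1)⟫_ℝ = A + δ := by
        rw [hA_def, hδ_def, inner_sub_left]
        ring
      rw [h1]
      ring
    have habcast : (0:ℝ) < (a:ℝ)*(b:ℝ) := by exact_mod_cast hab
    have habsplit : |(a:ℝ)*A + (b:ℝ)*s| = |(a:ℝ)*A| + |(b:ℝ)*s| := by
      apply abs_add_of_mul_nonneg
      nlinarith [mul_nonneg habcast.le hsign]
    have h1a : (1:ℝ) ≤ |(a:ℝ)| := by
      rw [← Int.cast_abs]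
      exact_mod_cast (by rw [Int.abs_eq_natAbs]; omega : (1:ℤ) ≤ |a|)
    have hnn : 0 ≤ |A| - |δ| := by
      have h13 : ‖pr (m+1) (toE (m+1) (z 1))‖ ≤ ‖pr (m+1) (toE (m+1) (z 3))‖ := h12.trans h23
      have hhalf : (‖pr (m+1) (toE (m+1) (z 1))‖/(2*‖pr (m+1) (toE (m+1) (z 3))‖)) ≤ 1 := by
        rw [div_le_one (by positivity)]
        linarith
      have e : (‖pr (m+1) (toE (m+1) (z 1))‖/(2*‖pr (m+1) (toE (m+1) (z 3))‖))/detL (m+1) z 2 ((m+1)-1)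
          ≤ 1/detL (m+1) z 2 ((m+1)-1) := by gcongr
      rw [habsA]
      linarith
    have hge1 : |(a:ℝ)*A + (b:ℝ)*s| - |(a:ℝ)*δ| ≤ |⟪α, toE (m+1) w⟫_ℝ| := by
      rw [hℓ]
      have h := abs_add_le ((a:ℝ)*A + (b:ℝ)*s + (a:ℝ)*δ) (-((a:ℝ)*δ))
      simp only [add_neg_cancel_right, abs_neg] at h
      linarith
    have hge2 : |A| - |δ| ≤ |(a:ℝ)*A + (b:ℝ)*s| - |(a:ℝ)*δ| := by
      rw [habsplit, abs_mul, abs_mul, abs_mul]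
      nlinarith [mul_nonneg (sub_nonneg.2 h1a) hnn, mul_nonneg (abs_nonneg (b:ℝ)) (abs_nonneg s)]
    calc (1 - ‖pr (m+1) (toE (m+1) (z 1))‖/(2*‖pr (m+1) (toE (m+1) (z 3))‖)) / detL (m+1) z 2 ((m+1)-1)
        = 1/detL (m+1) z 2 ((m+1)-1) - (‖pr (m+1) (toE (m+1) (z 1))‖/(2*‖pr (m+1) (toE (m+1) (z 3))‖))/detL (m+1) z 2 ((m+1)-1) := by
          rw [sub_div]
      _ ≤ |A| - |δ| := by rw [habsA]; linarith
      _ ≤ |(a:ℝ)*A + (b:ℝ)*s| - |(a:ℝ)*δ| := hge2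
      _ ≤ |⟪α, toE (m+1) w⟫_ℝ| := hge1
  -- final assembly
  have hr : (0:ℝ) < 1 - ‖pr (m+1) (toE (m+1) (z 1))‖/(2*‖pr (m+1) (toE (m+1) (z 3))‖) := by
    have h13 : ‖pr (m+1) (toE (m+1) (z 1))‖ ≤ ‖pr (m+1) (toE (m+1) (z 3))‖ := h12.trans h23
    have : ‖pr (m+1) (toE (m+1) (z 1))‖/(2*‖pr (m+1) (toE (m+1) (z 3))‖) < 1 := by
      rw [div_lt_one (by positivity)]
      linarith
    linarith
  have e1 : H ^ ((m+1)-1) ≤ ‖pr (m+1) (toE (m+1) w)‖ ^ ((m+1)-1) :=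
    pow_le_pow_left₀ hHnn hHle _
  have e3 : Dq (m+1) z 1 2 ^ ((m+1) - 1) /
        (Dq (m+1) z 2 ((m+1)-1) * Bq (m+1) z 1 ^ ((m+1) - 1)) *
        (1 - 1 / (2 * Bq (m+1) z 1 * Bq (m+1) z 2))
      = (1 - ‖pr (m+1) (toE (m+1) (z 1))‖/(2*‖pr (m+1) (toE (m+1) (z 3))‖)) / detL (m+1) z 2 ((m+1)-1) * H ^ ((m+1)-1) := by
    have hx1 := hu1pos.ne'
    have hx2 := hu2pos.ne'
    have hx3 := hu3pos.ne'
    have s2 : Dq (m+1) z 1 2 = H / ‖pr (m+1) (toE (m+1) (z 1))‖ := by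
      rw [Dq, hH12]
      field_simp
    have s3 : Dq (m+1) z 2 ((m+1)-1) * Bq (m+1) z 1 ^ ((m+1)-1)
        = detL (m+1) z 2 ((m+1)-1) / ‖pr (m+1) (toE (m+1) (z 1))‖^((m+1)-1) := by
      rw [Dq, Bq, div_pow, div_mul_div_comm, show (1:ℕ)+1 = 2 from rfl,
        mul_comm (detL (m+1) z 2 ((m+1)-1)) (‖pr (m+1) (toE (m+1) (z 2))‖ ^ ((m+1)-1))]
      exact mul_div_mul_left _ _ (pow_ne_zero _ hx2)
    have s4 : 2 * Bq (m+1) z 1 * Bq (m+1) z 2 = 2*‖pr (m+1) (toE (m+1) (z 3))‖/‖pr (m+1) (toE (m+1) (z 1))‖ := by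
      rw [Bq, Bq, show (1:ℕ)+1 = 2 from rfl, show (2:ℕ)+1 = 3 from rfl]
      field_simp
    rw [s2, s3, s4, div_pow, div_div_eq_mul_div, div_mul_cancel₀ _ (pow_ne_zero _ hx1),
      one_div_div]
    ring
  rw [e3]
  have habs : 0 ≤ |⟪α, toE (m+1) w⟫_ℝ| := abs_nonneg _
  calc (1 - ‖pr (m+1) (toE (m+1) (z 1))‖/(2*‖pr (m+1) (toE (m+1) (z 3))‖)) / detL (m+1) z 2 ((m+1)-1) * H ^ ((m+1)-1)
      ≤ |⟪α, toE (m+1) w⟫_ℝ| * H ^ ((m+1)-1) := by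
        apply mul_le_mul_of_nonneg_right hkey (by positivity)
    _ ≤ |⟪α, toE (m+1) w⟫_ℝ| * ‖pr (m+1) (toE (m+1) w)‖ ^ ((m+1)-1) :=
        mul_le_mul_of_nonneg_left e1 habs
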